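/- arXiv:1412.8595 — 2 statements merged into one kernel-verified Lean document; each statement's English description precedes it below -/
import Mathlib

section
/- If f : A^n → B is 2-set-transitive (i.e., its invariance group acts transitively on 2-element subsets of {1,...,n}), then f has a unique identification minor: for all two-element subsets I, J of {1,...,n}, the minors f_I and f_J are equivalent, i.e., there exists a permutation π of {1,...,n-1} with f_I(a) = f_J(aπ) for all a ∈ A^{n-1}. -/
/-- `ofo l` lists the distinct elements of `l` in order of first occurrence. -/
def ofo {A : Type*} [DecidableEq A] (l : List A) : List A :=
  l.reverse.dedup.reverse

/-- The order-of-first-occurrence list of a tuple. -/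
def ofoFun {A : Type*} [DecidableEq A] {n : ℕ} (a : Fin n → A) : List A :=
  ofo (List.ofFn a)

/-- `delta i j hij : [n+1] → [n]` is the map δ_I for I = {i,j}, i < j (0-indexed). -/
def delta {n : ℕ} (i j : Fin (n + 1)) (hij : i < j) : Fin (n + 1) → Fin n := fun t =>
  if h : (t : ℕ) < (j : ℕ) then
    ⟨t, lt_of_lt_of_le h (Nat.lt_succ_iff.mp j.isLt)⟩
  else if h2 : (t : ℕ) = (j : ℕ) then
    ⟨i, lt_of_lt_of_le (Fin.lt_def.mp hij) (Nat.lt_succ_iff.mp j.isLt)⟩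
  else ⟨(t : ℕ) - 1, by have := t.isLt; omega⟩

lemma delta_eq_delta_iff {n : ℕ} (i j : Fin (n + 1)) (hij : i < j) (t t' : Fin (n + 1)) :
    delta i j hij t = delta i j hij t' ↔
      t = t' ∨ (t = i ∧ t' = j) ∨ (t = j ∧ t' = i) := by
  have hi := Fin.lt_def.mp hij
  unfold delta
  split_ifs <;> simp_all [Fin.ext_iff] <;> omega

/-- section of delta -/
def sec {n : ℕ} (l : Fin (n + 1)) : Fin n → Fin (n + 1) := fun m =>
  if (m : ℕ) < (l : ℕ) then ⟨m, by omega⟩ else ⟨(m : ℕ) + 1, by omega⟩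

lemma factor {n : ℕ} (k l : Fin (n + 1)) (hkl : k < l) (g : Fin (n + 1) → Fin n)
    (hg : g k = g l)
    (hinj : ∀ t t', g t = g t' → t = t' ∨ (t = k ∧ t' = l) ∨ (t = l ∧ t' = k)) :
    ∃ π : Equiv.Perm (Fin n), ∀ t, π (delta k l hkl t) = g t := by
  have hk := Fin.lt_def.mp hkl
  have hsec_ne : ∀ m : Fin n, sec l m ≠ l := by
    intro m
    unfold sec
    split_ifs with h <;> simp [Fin.ext_iff] <;> omega
  have hinj' : Function.Injective (g ∘ sec l) := by
    intro m m' h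
    rcases hinj _ _ h with h1 | ⟨h1, h2⟩ | ⟨h1, h2⟩
    · unfold sec at h1
      split_ifs at h1 <;> simp_all [Fin.ext_iff] <;> omega
    · exact absurd h2 (hsec_ne m')
    · exact absurd h1 (hsec_ne m)
  refine ⟨Equiv.ofBijective _ (Finite.injective_iff_bijective.mp hinj'), fun t => ?_⟩
  show g (sec l (delta k l hkl t)) = g t
  rcases lt_trichotomy (t : ℕ) (l : ℕ) with h | h | h
  · have : sec l (delta k l hkl t) = t := by
      unfold delta sec; split_ifs <;> simp_all [Fin.ext_iff] <;> omega
    rw [this]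
  · have : sec l (delta k l hkl t) = k := by
      unfold delta sec; split_ifs <;> simp_all [Fin.ext_iff] <;> omega
    rw [this, hg]
    congr 1
    exact Fin.ext h.symm
  · have : sec l (delta k l hkl t) = t := by
      unfold delta sec; split_ifs <;> simp_all [Fin.ext_iff] <;> omega
    rw [this]

/-- A 2-set-transitive function has a unique identification minor. -/
theorem two_set_transitive_unique_identification_minor {A B : Type*} {n : ℕ}
    (f : (Fin (n + 1) → A) → B)
    (h2st : ∀ i j k l : Fin (n + 1), i ≠ j → k ≠ l →
      ∃ σ : Equiv.Perm (Fin (n + 1)),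
        (∀ a : Fin (n + 1) → A, f (a ∘ σ) = f a) ∧
        ({σ i, σ j} : Set (Fin (n + 1))) = {k, l})
    (i j : Fin (n + 1)) (hij : i < j) (k l : Fin (n + 1)) (hkl : k < l) :
    ∃ π : Equiv.Perm (Fin n), ∀ a : Fin n → A,
      f (a ∘ delta i j hij) = f ((a ∘ π) ∘ delta k l hkl) := by
  obtain ⟨σ, hσ, hset⟩ := h2st i j k l hij.ne hkl.ne
  rw [Set.pair_eq_pair_iff] at hset
  set g : Fin (n + 1) → Fin n := delta i j hij ∘ σ.symm with hg_def
  have hdij : delta i j hij i = delta i j hij j := by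
    rw [delta_eq_delta_iff]; tauto
  have hg : g k = g l := by
    rcases hset with ⟨h1, h2⟩ | ⟨h1, h2⟩ <;>
      simp only [hg_def, Function.comp, ← h1, ← h2, Equiv.symm_apply_apply]
    · exact hdij
    · exact hdij.symm
  have hinj : ∀ t t', g t = g t' → t = t' ∨ (t = k ∧ t' = l) ∨ (t = l ∧ t' = k) := by
    intro t t' h
    rcases (delta_eq_delta_iff i j hij _ _).mp h with h1 | ⟨h1, h2⟩ | ⟨h1, h2⟩
    · left; exact σ.symm.injective h1
    · have ht : t = σ i := by rw [← h1, Equiv.apply_symm_apply]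
      have ht' : t' = σ j := by rw [← h2, Equiv.apply_symm_apply]
      rcases hset with ⟨e1, e2⟩ | ⟨e1, e2⟩
      · right; left; exact ⟨ht.trans e1, ht'.trans e2⟩
      · right; right; exact ⟨ht.trans e1, ht'.trans e2⟩
    · have ht : t = σ j := by rw [← h1, Equiv.apply_symm_apply]
      have ht' : t' = σ i := by rw [← h2, Equiv.apply_symm_apply]
      rcases hset with ⟨e1, e2⟩ | ⟨e1, e2⟩
      · right; right; exact ⟨ht.trans e2, ht'.trans e1⟩
      · right; left; exact ⟨ht.trans e2, ht'.trans e1⟩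
  obtain ⟨π, hπ⟩ := factor k l hkl g hg hinj
  refine ⟨π, fun a => ?_⟩
  have h1 : f (a ∘ delta i j hij) = f (a ∘ g) := by
    have := hσ (a ∘ g)
    rw [← this]
    congr 1
    funext t
    simp [hg_def, Function.comp]
  rw [h1]
  congr 1
  funext t
  simp only [Function.comp_apply]
  rw [hπ t]
end

section
/- Let |A| = k ≥ 2, n = k+1, g' : P(A) → B, g = g' ∘ supp on A^k, and let (g^I)_{I} be a family of functions A^k → B indexed by two-element subsets I of {1,...,n} with g^I(a) = g(a) whenever supp(a) ≠ A; let (ρ_I)_I be permutations of {1,...,k} and φ a bijection of the two-element subsets of {1,...,n}. Then the rule f(b) = g^{φ(I)}(aρ_I) whenever b = aδ_I defines a well-defined function f : A^n → B (the value does not depend on the choice of a and I with b = aδ_I). -/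
/-- The 2-element subsets of Fin n. -/
def TwoSubset (n : ℕ) := {s : Finset (Fin n) // s.card = 2}

lemma delta_val {n : ℕ} (i j : Fin (n + 1)) (hij : i < j) (t : Fin (n + 1)) :
    ((delta i j hij t : Fin n) : ℕ) =
      if (t : ℕ) < (j : ℕ) then (t : ℕ) else if (t : ℕ) = (j : ℕ) then (i : ℕ)
      else (t : ℕ) - 1 := by
  unfold delta; split_ifs <;> simp_all

lemma delta_surjective {n : ℕ} (i j : Fin (n + 1)) (hij : i < j) :
    Function.Surjective (delta i j hij) := by
  intro m
  by_cases h : (m : ℕ) < (j : ℕ)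
  · refine ⟨⟨m, by omega⟩, ?_⟩
    apply Fin.ext
    rw [delta_val]
    simp [h]
  · refine ⟨⟨m + 1, by have := m.isLt; omega⟩, ?_⟩
    apply Fin.ext
    rw [delta_val]
    have := j.isLt
    have h1 : ¬ ((m : ℕ) + 1 < (j : ℕ)) := by omega
    have h2 : ¬ ((m : ℕ) + 1 = (j : ℕ)) := by omega
    simp [h1, h2]

lemma delta_eq_delta {n : ℕ} (i j : Fin (n + 1)) (hij : i < j) {s t : Fin (n + 1)}
    (hst : s ≠ t) (h : delta i j hij s = delta i j hij t) :
    (s = i ∧ t = j) ∨ (s = j ∧ t = i) := by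
  have hs := delta_val i j hij s
  have ht := delta_val i j hij t
  rw [h] at hs
  have hij' : (i : ℕ) < (j : ℕ) := hij
  have hst' : (s : ℕ) ≠ (t : ℕ) := fun e => hst (Fin.ext e)
  have hgoal : ((s : ℕ) = i ∧ (t : ℕ) = j) ∨ ((s : ℕ) = j ∧ (t : ℕ) = i) := by
    split_ifs at hs ht <;> omega
  rcases hgoal with ⟨h1, h2⟩ | ⟨h1, h2⟩
  · exact Or.inl ⟨Fin.ext h1, Fin.ext h2⟩
  · exact Or.inr ⟨Fin.ext h1, Fin.ext h2⟩

lemma range_comp_delta {A : Type*} {n : ℕ} (a : Fin n → A) (i j : Fin (n + 1))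
    (hij : i < j) : Set.range (a ∘ delta i j hij) = Set.range a := by
  rw [Set.range_comp, Set.range_eq_univ.2 (delta_surjective i j hij), Set.image_univ]

lemma delta_apply_left {n : ℕ} (i j : Fin (n + 1)) (hij : i < j) :
    delta i j hij i = delta i j hij j := by
  apply Fin.ext
  rw [delta_val, delta_val]
  have hij' : (i : ℕ) < (j : ℕ) := hij
  simp [hij', lt_irrefl]

lemma unique_decomp {A : Type*} [Fintype A] {k : ℕ} (hcard : Fintype.card A = k)
    {a a' : Fin k → A} {i j i' j' : Fin (k + 1)} (hij : i < j) (hij' : i' < j')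
    (ha : Set.range a = Set.univ)
    (heq : a ∘ delta i j hij = a' ∘ delta i' j' hij') :
    a = a' ∧ i = i' ∧ j = j' := by
  have hasurj : Function.Surjective a := Set.range_eq_univ.1 ha
  have hainj : Function.Injective a := by
    have : Function.Bijective a :=
      (Fintype.bijective_iff_surjective_and_card a).2 ⟨hasurj, by simp [hcard]⟩
    exact this.1
  have heq' : ∀ t, a (delta i j hij t) = a' (delta i' j' hij' t) :=
    fun t => congrFun heq t
  have hbb : a (delta i j hij i') = a (delta i j hij j') := by
    rw [heq' i', heq' j', delta_apply_left i' j' hij']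
  have hdd := hainj hbb
  have hpair := delta_eq_delta i j hij (ne_of_lt hij') hdd
  have hii : i = i' ∧ j = j' := by
    rcases hpair with ⟨h1, h2⟩ | ⟨h1, h2⟩
    · exact ⟨h1.symm, h2.symm⟩
    · exfalso
      have : (i : ℕ) < (j : ℕ) := hij
      have h1' : (i' : ℕ) = (j : ℕ) := congrArg Fin.val h1
      have h2' : (j' : ℕ) = (i : ℕ) := congrArg Fin.val h2
      have : (i' : ℕ) < (j' : ℕ) := hij'
      omega
  refine ⟨?_, hii⟩
  obtain ⟨hi, hj⟩ := hii
  subst hi; subst hj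
  funext m
  obtain ⟨t, ht⟩ := delta_surjective i j hij m
  have h1 := heq' t
  have : delta i j hij' = delta i j hij := rfl
  rw [this] at h1
  rw [← ht, h1]

/-- the rule f(aδ_I) = g^{φ(I)}(aρ_I) gives a well-defined function
f : A^{k+1} → B, provided each g^I agrees with g = g' ∘ supp on tuples a with
supp(a) ≠ A. -/
theorem fGPphi_well_defined {A B : Type*} [Fintype A] {k : ℕ}
    (hk : 2 ≤ k) (hcard : Fintype.card A = k)
    (g' : Set A → B)
    (gI : TwoSubset (k + 1) → (Fin k → A) → B)
    (hgI : ∀ (s : TwoSubset (k + 1)) (a : Fin k → A),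
      Set.range a ≠ Set.univ → gI s a = g' (Set.range a))
    (P : TwoSubset (k + 1) → Equiv.Perm (Fin k))
    (φ : TwoSubset (k + 1) ≃ TwoSubset (k + 1)) :
    ∃ f : (Fin (k + 1) → A) → B,
      ∀ (a : Fin k → A) (i j : Fin (k + 1)) (hij : i < j),
        f (a ∘ delta i j hij) =
          gI (φ ⟨{i, j}, Finset.card_pair (ne_of_lt hij)⟩)
            (a ∘ (P ⟨{i, j}, Finset.card_pair (ne_of_lt hij)⟩)) := by
  classical
  -- range of a ∘ perm = range a
  have hrangeP : ∀ (s : TwoSubset (k + 1)) (a : Fin k → A),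
      Set.range (a ∘ (P s)) = Set.range a := by
    intro s a
    rw [Set.range_comp, Set.range_eq_univ.2 (P s).surjective, Set.image_univ]
  -- the value functional
  set val : (Fin k → A) → (i j : Fin (k + 1)) → i < j → B := fun a i j hij =>
    gI (φ ⟨{i, j}, Finset.card_pair (ne_of_lt hij)⟩)
      (a ∘ (P ⟨{i, j}, Finset.card_pair (ne_of_lt hij)⟩)) with hval
  -- well-definedness of val
  have key : ∀ (a a' : Fin k → A) (i j i' j' : Fin (k + 1)) (hij : i < j)
      (hij' : i' < j'), a ∘ delta i j hij = a' ∘ delta i' j' hij' →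
      val a i j hij = val a' i' j' hij' := by
    intro a a' i j i' j' hij hij' heq
    by_cases ha : Set.range a = Set.univ
    · obtain ⟨haa, hii, hjj⟩ := unique_decomp hcard hij hij' ha heq
      subst haa; subst hii; subst hjj; rfl
    · have hra' : Set.range a' = Set.range a := by
        rw [← range_comp_delta a' i' j' hij', ← heq, range_comp_delta]
      rw [hval]
      simp only []
      rw [hgI _ _ (by erw [hrangeP]; exact ha),
          hgI _ _ (by erw [hrangeP, hra']; exact ha)]
      erw [hrangeP, hrangeP, hra']
  refine ⟨fun b =>
    if h : ∃ v : B, ∀ (a : Fin k → A) (i j : Fin (k + 1)) (hij : i < j),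
        b = a ∘ delta i j hij → v = val a i j hij
    then h.choose else g' (Set.range b), ?_⟩
  intro a i j hij
  have hex : ∃ v : B, ∀ (a' : Fin k → A) (i' j' : Fin (k + 1)) (hij' : i' < j'),
      a ∘ delta i j hij = a' ∘ delta i' j' hij' → v = val a' i' j' hij' := by
    exact ⟨val a i j hij, fun a' i' j' hij' heq => key a a' i j i' j' hij hij' heq⟩
  beta_reduce
  rw [dif_pos hex]
  exact hex.choose_spec a i j hij rfl
end
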